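/- Let f : ℝ → ℝ be differentiable on the interval [a̲,ā], let [D̲,D̄] be an interval with 0 ∉ [D̲,D̄] such that f′(x) ∈ [D̲,D̄] for all x ∈ [a̲,ā], and let â ∈ [a̲,ā]. If the intersection of [a̲,ā] with the set {â − f(â)/d | d ∈ [D̲,D̄]} is empty, then f has no zero in [a̲,ā]. -/

import Mathlib

/-- An empty interval Newton image certifies unsatisfiability: if `f` is
differentiable on `[al, au]` with derivative values enclosed in `[Dl, Du]`
(an interval not containing zero), `ahat ∈ [al, au]`, and the intersection of
`[al, au]` with the Newton image `{ahat − f(ahat)/d | d ∈ [Dl, Du]}` is empty,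
then `f` has no zero in `[al, au]`. -/
theorem interval_newton_empty_no_root (f f' : ℝ → ℝ) (al au Dl Du ahat : ℝ)
    (hdf : ∀ x ∈ Set.Icc al au, HasDerivWithinAt f (f' x) (Set.Icc al au) x)
    (hD0 : (0 : ℝ) ∉ Set.Icc Dl Du)
    (hD : ∀ x ∈ Set.Icc al au, f' x ∈ Set.Icc Dl Du)
    (hahat : ahat ∈ Set.Icc al au)
    (hempty : Set.Icc al au ∩ {y : ℝ | ∃ d ∈ Set.Icc Dl Du, y = ahat - f ahat / d} = ∅) :
    ∀ x ∈ Set.Icc al au, f x ≠ 0 := by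
  intro x hx hfx
  have mvt : ∀ p q : ℝ, p ∈ Set.Icc al au → q ∈ Set.Icc al au → p < q →
      ∃ c ∈ Set.Icc al au, f q - f p = f' c * (q - p) := by
    intro p q hp hq hpq
    have hsub : Set.Icc p q ⊆ Set.Icc al au := Set.Icc_subset_Icc hp.1 hq.2
    have hcont : ContinuousOn f (Set.Icc p q) := fun y hy =>
      ((hdf y (hsub hy)).continuousWithinAt).mono hsub
    have hderiv : ∀ y ∈ Set.Ioo p q, HasDerivAt f (f' y) y := by
      intro y hy
      have hy' : y ∈ Set.Icc al au := hsub (Set.Ioo_subset_Icc_self hy)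
      exact (hdf y hy').hasDerivAt
        (Icc_mem_nhds (lt_of_le_of_lt hp.1 hy.1) (lt_of_lt_of_le hy.2 hq.2))
    obtain ⟨c, hc, hceq⟩ := exists_hasDerivAt_eq_slope f f' hpq hcont hderiv
    refine ⟨c, hsub (Set.Ioo_subset_Icc_self hc), ?_⟩
    rw [hceq, div_mul_cancel₀ _ (sub_ne_zero.mpr hpq.ne')]
  have key : ∃ c ∈ Set.Icc al au, f ahat - f x = f' c * (ahat - x) := by
    rcases lt_trichotomy x ahat with h | h | h
    · exact mvt x ahat hx hahat h
    · exact ⟨x, hx, by rw [h]; ring⟩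
    · obtain ⟨c, hc, hceq⟩ := mvt ahat x hahat hx h
      exact ⟨c, hc, by linarith⟩
  obtain ⟨c, hc, hceq⟩ := key
  have hfc := hD c hc
  have hne : f' c ≠ 0 := fun h => hD0 (h ▸ hfc)
  have hxeq : x = ahat - f ahat / f' c := by
    rw [hfx, sub_zero] at hceq
    field_simp [hceq]
    rw [hceq]; ring
  have : x ∈ Set.Icc al au ∩ {y : ℝ | ∃ d ∈ Set.Icc Dl Du, y = ahat - f ahat / d} :=
    ⟨hx, ⟨f' c, hfc, hxeq⟩⟩
  rw [hempty] at this
  exact this
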